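/- arXiv:2503.18453 — 2 statements merged into one kernel-verified Lean document; each statement's English description precedes it below -/
import Mathlib

section
/- For all integers 2 ≤ k ≤ N, the quantity a_k(N) satisfies the recursion a_k(N) = (2(k−1)/(N(N−k+1)))·a_{k−1}(N) + ((k−1)/(N²(N−k+1)))·a_{k−2}(N). -/
open Finset

noncomputable section

namespace WgPerm

/-- Number of blocks of the partition of `α` corresponding to the setoid `s`. -/
def numBlocks {α : Type*} (s : Setoid α) : ℕ := Nat.card (Quotient s)

/-- Number of blocks of `s` contained in the block `B` of `t` (meaningful when `s ≤ t`). -/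
def lam {α : Type*} (s t : Setoid α) (B : Quotient t) : ℕ :=
  Nat.card {c : Quotient s // Quotient.mk t (Quotient.out c) = B}

/-- Möbius function of the partition lattice:
`μ(s,t) = ∏_B (−1)^{λ_B−1} (λ_B−1)!` over the blocks `B` of `t`. -/
def mobius {α : Type*} (s t : Setoid α) : ℤ :=
  ∏ᶠ B : Quotient t, (-1 : ℤ) ^ (lam s t B - 1) * (Nat.factorial (lam s t B - 1) : ℤ)

/-- Kernel partition `Π_i` of a tuple `i`. -/
def kerP {k N : ℕ} (i : Fin k → Fin N) : Setoid (Fin k) := Setoid.ker i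

/-- `(i,j)` entry of the permutation matrix of `g`. -/
def permEntry {N : ℕ} (g : Equiv.Perm (Fin N)) (i j : Fin N) : ℝ :=
  if g i = j then 1 else 0

/-- The Weingarten function for the symmetric group `S_N`. -/
def Wg (k N : ℕ) (σ τ : Setoid (Fin k)) : ℝ :=
  ∑ᶠ π ∈ {π : Setoid (Fin k) | π ≤ σ ⊓ τ},
    ((mobius π σ * mobius π τ : ℤ) : ℝ) / (Nat.descFactorial N (numBlocks π) : ℝ)

/-- `|D(π)|`: the number of singleton blocks of `π`. -/
def numSingletons {k : ℕ} (π : Setoid (Fin k)) : ℕ :=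
  Nat.card {j : Fin k | ∀ m, π j m → m = j}

/-- The centered Weingarten function for the symmetric group `S_N`. -/
def cWg (k N : ℕ) (σ τ : Setoid (Fin k)) : ℝ :=
  ∑ i ∈ Finset.range (numSingletons (σ ⊔ τ) + 1),
    ((numSingletons (σ ⊔ τ)).choose i : ℝ) * (-1 : ℝ) ^ i *
      ∑ᶠ π ∈ {π : Setoid (Fin k) | π ≤ σ ⊓ τ},
        ((mobius π σ * mobius π τ : ℤ) : ℝ) * ((N : ℝ) ^ i)⁻¹
          / (Nat.descFactorial N (numBlocks π - i) : ℝ)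

/-- `a_k(N) = Σ_{l=0}^{k} binom(k,l)·(−N)^{−(k−l)}/(N)_l`. -/
def aSeq (k N : ℕ) : ℝ :=
  ∑ l ∈ Finset.range (k + 1),
    (k.choose l : ℝ) * ((-(N : ℝ)) ^ (k - l))⁻¹ / (Nat.descFactorial N l : ℝ)


/-! ### Auxiliary machinery for the recursion -/

/-- Signed binomial transform. -/
def S (k : ℕ) (f : ℕ → ℝ) : ℝ :=
  ∑ l ∈ Finset.range (k + 1), (-1 : ℝ) ^ l * (k.choose l : ℝ) * f l

/-- `c N l = N^l / (N)_l`. -/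
def c (N l : ℕ) : ℝ := (N : ℝ) ^ l / (Nat.descFactorial N l : ℝ)

lemma S_succ (k : ℕ) (f : ℕ → ℝ) :
    S (k + 1) f = S k f - S k (fun l => f (l + 1)) := by
  have e1 : S k f = ∑ l ∈ Finset.range (k + 1 + 1), (-1 : ℝ) ^ l * (k.choose l : ℝ) * f l := by
    rw [Finset.sum_range_succ, Nat.choose_succ_self]
    simp [S]
  have main :
      (∑ l ∈ Finset.range (k + 1 + 1), (-1 : ℝ) ^ l * ((k+1).choose l : ℝ) * f l)
        - ∑ l ∈ Finset.range (k + 1 + 1), (-1 : ℝ) ^ l * (k.choose l : ℝ) * f l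
      = -∑ l ∈ Finset.range (k + 1), (-1 : ℝ) ^ l * (k.choose l : ℝ) * f (l + 1) := by
    rw [← Finset.sum_sub_distrib, Finset.sum_range_succ']
    have e0 : (-1:ℝ)^0 * (((k+1).choose 0 : ℕ) : ℝ) * f 0 - (-1:ℝ)^0 * ((k.choose 0 : ℕ) : ℝ) * f 0 = 0 := by
      simp
    rw [e0, add_zero, ← Finset.sum_neg_distrib]
    apply Finset.sum_congr rfl
    intro i _
    have hp : (((k+1).choose (i+1) : ℕ) : ℝ) = (k.choose i : ℝ) + (k.choose (i+1) : ℝ) := by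
      push_cast [Nat.choose_succ_succ]
      ring
    rw [hp]
    ring
  show (∑ l ∈ Finset.range (k + 1 + 1), (-1 : ℝ) ^ l * ((k+1).choose l : ℝ) * f l) = _
  rw [e1, S]
  linarith [main]

lemma S_weight (k : ℕ) (h : ℕ → ℝ) :
    S (k + 1) (fun l => (l : ℝ) * h l) = -((k : ℝ) + 1) * S k (fun l => h (l + 1)) := by
  rw [S, Finset.sum_range_succ']
  simp only [Nat.cast_zero, zero_mul, mul_zero, add_zero]
  rw [S, neg_mul, Finset.mul_sum, ← Finset.sum_neg_distrib]
  apply Finset.sum_congr rfl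
  intro i _
  have hid : ((k:ℝ) + 1) * (k.choose i : ℝ) = (((k+1).choose (i+1) : ℕ) : ℝ) * ((i:ℝ) + 1) := by
    exact_mod_cast congrArg (Nat.cast (R := ℝ)) (Nat.add_one_mul_choose_eq k i)
  push_cast at hid ⊢
  linear_combination ((-1:ℝ)^i * h (i+1)) * hid

lemma descFactorial_cast_ne_zero (N l : ℕ) (hl : l ≤ N) :
    (Nat.descFactorial N l : ℝ) ≠ 0 := by
  have : Nat.descFactorial N l ≠ 0 := by
    intro h0
    exact absurd (Nat.descFactorial_eq_zero_iff_lt.mp h0) (by omega)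
  exact_mod_cast this

lemma c_rec (N l : ℕ) (h : l + 1 ≤ N) :
    ((N : ℝ) - (l : ℝ)) * c N (l + 1) = (N : ℝ) * c N l := by
  have hl : l ≤ N := by omega
  have h0 : (Nat.descFactorial N l : ℝ) ≠ 0 := descFactorial_cast_ne_zero N l hl
  have h1 : ((N - l : ℕ) : ℝ) = (N : ℝ) - (l : ℝ) := by
    push_cast [Nat.cast_sub hl]; ring
  have h2 : ((N:ℝ) - (l:ℝ)) ≠ 0 := by
    rw [← h1]
    have : 0 < N - l := by omega
    exact_mod_cast this.ne'
  have hdf : (Nat.descFactorial N (l+1) : ℝ) = ((N:ℝ) - (l:ℝ)) * (Nat.descFactorial N l : ℝ) := by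
    rw [Nat.descFactorial_succ]
    push_cast [Nat.cast_sub hl]
    ring
  rw [c, c, hdf]
  field_simp
  ring

lemma key (N m : ℕ) (h : m + 2 ≤ N) :
    (N : ℝ) * S (m + 2) (c N) =
      ((m : ℝ) + 1) * (S m (c N) - 2 * S (m + 1) (c N) + S (m + 1 + 1) (c N)) := by
  have step1 : (N:ℝ) * S (m + 1 + 1) (c N)
      = -(S (m+1) (fun l => (l:ℝ) * c N (l+1))) := by
    rw [S_succ (m+1) (c N), mul_sub]
    rw [S, S, S, Finset.mul_sum, Finset.mul_sum, ← Finset.sum_sub_distrib, ← Finset.sum_neg_distrib]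
    apply Finset.sum_congr rfl
    intro l hl
    have hlN : l + 1 ≤ N := by
      have := Finset.mem_range.mp hl; omega
    have hc := c_rec N l hlN
    linear_combination (-((-1:ℝ)^l * (((m+1).choose l : ℕ) : ℝ))) * hc
  have step3 : S (m+1) (fun l => (l:ℝ) * c N (l+1)) = -((m:ℝ)+1) * S m (fun l => c N (l+1+1)) :=
    S_weight m (fun l => c N (l+1))
  have A := S_succ m (c N)
  have B := S_succ m (fun l => c N (l+1))
  have C := S_succ (m+1) (c N)
  show (N : ℝ) * S (m + 1 + 1) (c N) = _
  rw [step1, step3]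
  linear_combination ((m:ℝ)+1) * (A + B - C)

lemma aSeq_eq (k N : ℕ) (hN : 0 < N) :
    aSeq k N = (-1:ℝ)^k * (((N:ℝ))^k)⁻¹ * S k (c N) := by
  have hN0 : (N:ℝ) ≠ 0 := by exact_mod_cast hN.ne'
  rw [aSeq, S, Finset.mul_sum]
  apply Finset.sum_congr rfl
  intro l hl
  have hlk : l ≤ k := by have := Finset.mem_range.mp hl; omega
  have e2 : (N:ℝ)^(k-l) * (N:ℝ)^l = (N:ℝ)^k := by
    rw [← pow_add]; congr 1; omega
  have s1 : (-1:ℝ)^k * (-1:ℝ)^l = (-1:ℝ)^(k-l) := by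
    rw [← pow_add, show k + l = (k-l) + 2*l by omega, pow_add, pow_mul]
    norm_num
  have hneg : ((-(N:ℝ)) ^ (k - l))⁻¹ = (-1:ℝ)^(k-l) * ((N:ℝ)^(k-l))⁻¹ := by
    rw [neg_pow, mul_inv]
    congr 1
    rw [← inv_pow, inv_neg, inv_one]
  rw [hneg, c, ← s1, ← e2]
  have hp : ((N:ℝ)^(k-l)) ≠ 0 := pow_ne_zero _ hN0
  have hq : ((N:ℝ)^l) ≠ 0 := pow_ne_zero _ hN0
  rw [mul_inv]
  have hinv : ((N:ℝ)⁻¹)^l * (N:ℝ)^l = 1 := by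
    rw [← mul_pow, inv_mul_cancel₀ hN0, one_pow]
  linear_combination (-(k.choose l : ℝ) * ((N:ℝ)⁻¹)^(k-l) * ((Nat.descFactorial N l : ℝ))⁻¹ * (-1:ℝ)^k * (-1:ℝ)^l) * hinv


/-- recursion for `a_k(N)`. -/
theorem stmt8 (k N : ℕ) (h2 : 2 ≤ k) (hkN : k ≤ N) :
    aSeq k N =
      2 * ((k : ℝ) - 1) / ((N : ℝ) * ((N : ℝ) - (k : ℝ) + 1)) * aSeq (k - 1) N +
        ((k : ℝ) - 1) / ((N : ℝ) ^ 2 * ((N : ℝ) - (k : ℝ) + 1)) * aSeq (k - 2) N := by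
  obtain ⟨m, rfl⟩ : ∃ m, k = m + 2 := ⟨k - 2, by omega⟩
  have hN : 0 < N := by omega
  have hN0 : (N:ℝ) ≠ 0 := by exact_mod_cast hN.ne'
  have hpos : (0:ℝ) < (N:ℝ) - ((m:ℝ)+1) := by
    have : ((m:ℝ)+2 : ℝ) ≤ (N:ℝ) := by exact_mod_cast hkN
    linarith
  have hne : (N:ℝ) - ((m:ℝ)+1) ≠ 0 := hpos.ne'
  have h1 : m + 2 - 1 = m + 1 := by omega
  have h2' : m + 2 - 2 = m := by omega
  have hk := key N m hkN
  have hS2 : S (m+2) (c N) =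
      ((m:ℝ)+1) * (S m (c N) - 2 * S (m+1) (c N)) / ((N:ℝ) - ((m:ℝ)+1)) := by
    rw [eq_div_iff hne]
    linear_combination hk
  rw [h1, h2', aSeq_eq (m+2) N hN, aSeq_eq (m+1) N hN, aSeq_eq m N hN, hS2]
  have hne2 : (N:ℝ) - ((m:ℝ)+2) + 1 ≠ 0 := by
    rw [show (N:ℝ) - ((m:ℝ)+2) + 1 = (N:ℝ) - ((m:ℝ)+1) from by ring]
    exact hne
  push_cast
  field_simp [hne, hne2]
  ring

end WgPerm

end
end

section
/- Fix an integer k ≥ 1 and σ,τ ∈ P(k), and set d = |D(σ∨τ)|. If d is even and d ≠ k, then N^{#(σ∧τ)+d/2}·W̊g_k(σ,τ,N) converges, as N → ∞, to μ(σ∧τ,σ)·μ(σ∧τ,τ)·(d−1)!!, where (2m−1)!! = ∏_{j=1}^{m}(2j−1) and (−1)!! = 1. -/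
open Finset

noncomputable section

namespace WgPerm

section Aux

def Pprod (b x : ℝ) (i : ℕ) : ℝ := ∏ j ∈ range i, (1 - (b - 1 - (j : ℝ)) * x)

def Ssum (b x : ℝ) (d : ℕ) : ℝ :=
  ∑ i ∈ range (d + 1), (-1 : ℝ) ^ i * (d.choose i : ℝ) * Pprod b x i

def Tsum (b x : ℝ) (e : ℕ) : ℝ :=
  ∑ i ∈ range (e + 1), (-1 : ℝ) ^ i * (e.choose i : ℝ) * (b - 1 - (i : ℝ)) * Pprod b x i

@[simp] lemma Pprod_zero (b x : ℝ) : Pprod b x 0 = 1 := by simp [Pprod]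

lemma Pprod_succ (b x : ℝ) (i : ℕ) :
    Pprod b x (i + 1) = Pprod b x i * (1 - (b - 1 - (i : ℝ)) * x) := by
  rw [Pprod, prod_range_succ]; rfl

lemma aux1 (b x : ℝ) (e : ℕ) :
    ∑ i ∈ range (e + 1), (-1 : ℝ) ^ i * (e.choose i : ℝ) * Pprod b x (i + 1)
      = Ssum b x e - x * Tsum b x e := by
  rw [Tsum, Ssum, Finset.mul_sum, ← Finset.sum_sub_distrib]
  refine Finset.sum_congr rfl fun i _ => ?_
  rw [Pprod_succ]; ring

lemma aux2 (b x : ℝ) (e : ℕ) :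
    Ssum b x e + ∑ i ∈ range (e + 1), (-1 : ℝ) ^ i * (e.choose (i + 1) : ℝ) * Pprod b x (i + 1)
      = 1 := by
  rw [Ssum, Finset.sum_range_succ' _ e, Finset.sum_range_succ
    (fun i => (-1 : ℝ) ^ i * (e.choose (i + 1) : ℝ) * Pprod b x (i + 1)) e]
  simp only [Nat.choose_succ_self, Nat.cast_zero, mul_zero, zero_mul, add_zero, mul_one,
    Nat.choose_zero_right, Nat.cast_one, pow_zero, one_mul, Pprod_zero]
  have : ∀ i ∈ range e,
      (-1 : ℝ) ^ (i + 1) * (e.choose (i + 1) : ℝ) * Pprod b x (i + 1)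
        = -((-1 : ℝ) ^ i * (e.choose (i + 1) : ℝ) * Pprod b x (i + 1)) := by
    intro i _; ring
  rw [Finset.sum_congr rfl this]
  rw [Finset.sum_neg_distrib]
  ring

lemma S_succ_s14 (b x : ℝ) (e : ℕ) : Ssum b x (e + 1) = x * Tsum b x e := by
  have hsplit : Ssum b x (e + 1)
      = 1 - (∑ i ∈ range (e + 1), (-1 : ℝ) ^ i * (e.choose i : ℝ) * Pprod b x (i + 1))
          - (∑ i ∈ range (e + 1), (-1 : ℝ) ^ i * (e.choose (i + 1) : ℝ) * Pprod b x (i + 1)) := by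
    rw [Ssum, Finset.sum_range_succ' _ (e + 1)]
    have : ∀ i ∈ range (e + 1),
        (-1 : ℝ) ^ (i + 1) * (((e + 1).choose (i + 1) : ℕ) : ℝ) * Pprod b x (i + 1)
          = -((-1 : ℝ) ^ i * (e.choose i : ℝ) * Pprod b x (i + 1))
            - (-1 : ℝ) ^ i * (e.choose (i + 1) : ℝ) * Pprod b x (i + 1) := by
      intro i _
      rw [Nat.choose_succ_succ]
      push_cast
      ring
    rw [Finset.sum_congr rfl this]
    simp only [Finset.sum_sub_distrib, Finset.sum_neg_distrib]
    simp [Pprod]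
    ring
  have h1 := aux1 b x e
  have h2 := aux2 b x e
  rw [hsplit, h1]
  linarith

lemma T_succ (b x : ℝ) (e : ℕ) :
    Tsum b x (e + 1) = ((e : ℝ) + 1) * Ssum b x e + (b - 2 - (e : ℝ)) * x * Tsum b x e := by
  have hU : ∑ i ∈ range (e + 2), (-1 : ℝ) ^ i * ((e + 1).choose i : ℝ) * (i : ℝ) * Pprod b x i
      = -((e : ℝ) + 1) * (Ssum b x e - x * Tsum b x e) := by
    rw [Finset.sum_range_succ' _ (e + 1)]
    have : ∀ i ∈ range (e + 1),
        (-1 : ℝ) ^ (i + 1) * (((e + 1).choose (i + 1) : ℕ) : ℝ) * ((i : ℝ) + 1) * Pprod b x (i + 1)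
          = -(((e : ℝ) + 1) * ((-1 : ℝ) ^ i * (e.choose i : ℝ) * Pprod b x (i + 1))) := by
      intro i _
      have hc : ((e + 1).choose (i + 1) : ℝ) * ((i : ℝ) + 1) = ((e : ℝ) + 1) * (e.choose i : ℝ) := by
        have := Nat.add_one_mul_choose_eq e i
        have := congrArg (fun n : ℕ => (n : ℝ)) this
        push_cast at this ⊢
        linarith
      calc (-1 : ℝ) ^ (i + 1) * (((e + 1).choose (i + 1) : ℕ) : ℝ) * ((i : ℝ) + 1) * Pprod b x (i + 1)
          = (-1 : ℝ) ^ (i + 1) * (((e + 1).choose (i + 1) : ℝ) * ((i : ℝ) + 1)) * Pprod b x (i + 1) := by ring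
        _ = -(((e : ℝ) + 1) * ((-1 : ℝ) ^ i * (e.choose i : ℝ) * Pprod b x (i + 1))) := by
            rw [hc]; ring
    push_cast
    rw [Finset.sum_congr rfl this, Finset.sum_neg_distrib, ← Finset.mul_sum, aux1]
    simp
    ring
  have hT : Tsum b x (e + 1)
      = (b - 1) * Ssum b x (e + 1)
        - ∑ i ∈ range (e + 2), (-1 : ℝ) ^ i * ((e + 1).choose i : ℝ) * (i : ℝ) * Pprod b x i := by
    rw [Tsum, Ssum, Finset.mul_sum, ← Finset.sum_sub_distrib]
    refine Finset.sum_congr rfl fun i _ => ?_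
    ring
  rw [hT, hU, S_succ_s14]
  ring

lemma S_rec (b x : ℝ) (d : ℕ) :
    Ssum b x (d + 2) = ((d : ℝ) + 1) * x * Ssum b x d
      + (b - ((d : ℝ) + 2)) * x * Ssum b x (d + 1) := by
  rw [show d + 2 = (d + 1) + 1 from rfl, S_succ_s14, T_succ, S_succ_s14]
  ring

@[simp] lemma Ssum_zero (b x : ℝ) : Ssum b x 0 = 1 := by simp [Ssum]

lemma Ssum_one (b x : ℝ) : Ssum b x 1 = (b - 1) * x := by
  simp [Ssum, Finset.sum_range_succ, Pprod_succ]

/-- Structure lemma: `S_{2m}(x) = x^m p(x)` with `p 0 = (2m-1)!!`, `S_{2m+1}(x) = x^{m+1} q(x)`. -/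
lemma S_structure (b : ℝ) (m : ℕ) :
    ∃ p q : ℝ → ℝ, Continuous p ∧ Continuous q
      ∧ p 0 = ∏ j ∈ range m, (2 * (j : ℝ) + 1)
      ∧ (∀ x, Ssum b x (2 * m) = x ^ m * p x)
      ∧ (∀ x, Ssum b x (2 * m + 1) = x ^ (m + 1) * q x) := by
  induction m with
  | zero =>
    refine ⟨fun _ => 1, fun _ => b - 1, continuous_const, continuous_const, by simp, ?_, ?_⟩
    · intro x; simp
    · intro x; rw [Ssum_one]; simp; ring
  | succ m ih =>
    obtain ⟨p, q, hp, hq, hp0, hSp, hSq⟩ := ih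
    refine ⟨fun x => (2 * (m : ℝ) + 1) * p x + (b - (2 * (m : ℝ) + 2)) * x * q x,
      fun x => (2 * (m : ℝ) + 2) * q x
        + (b - (2 * (m : ℝ) + 3)) * ((2 * (m : ℝ) + 1) * p x + (b - (2 * (m : ℝ) + 2)) * x * q x),
      by continuity, by continuity, ?_, ?_, ?_⟩
    · simp [hp0, prod_range_succ]
      ring
    · intro x
      have h := S_rec b x (2 * m)
      rw [show 2 * (m + 1) = 2 * m + 2 from by ring, h, hSp, hSq]
      push_cast
      ring
    · intro x
      have h := S_rec b x (2 * m + 1)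
      have h2 := S_rec b x (2 * m)
      rw [show 2 * (m + 1) + 1 = (2 * m + 1) + 2 from by ring, h,
        show (2 * m + 1) + 1 = 2 * m + 2 from rfl, h2, hSp, hSq]
      push_cast
      ring


/-- Cast of descFactorial as product of real factors, for `b ≤ N`. -/
lemma cast_descFactorial_prod (N b : ℕ) (h : b ≤ N) :
    ((N.descFactorial b : ℕ) : ℝ) = ∏ j ∈ range b, ((N : ℝ) - (j : ℝ)) := by
  rw [Nat.descFactorial_eq_prod_range]
  push_cast
  refine Finset.prod_congr rfl fun j hj => ?_
  simp only [Finset.mem_range] at hj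
  rw [Nat.cast_sub (by omega : j ≤ N)]

/-- Splitting of the descending factorial: `(N)_b = (N)_{b-i} · ∏_{j<i} (N - (b-1-j))`. -/
lemma descFactorial_split (N b i : ℕ) (hib : i ≤ b) (hbN : b ≤ N) :
    ((N.descFactorial b : ℕ) : ℝ)
      = ((N.descFactorial (b - i) : ℕ) : ℝ)
        * ∏ j ∈ range i, ((N : ℝ) - ((b : ℝ) - 1 - (j : ℝ))) := by
  have key := Nat.descFactorial_mul_descFactorial (show b - i ≤ b by omega) (n := N)
  rw [show b - (b - i) = i by omega] at key
  have hcast : (((N - (b - i)).descFactorial i : ℕ) : ℝ)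
      = ∏ j ∈ range i, ((N : ℝ) - ((b : ℝ) - 1 - (j : ℝ))) := by
    rw [Nat.descFactorial_eq_prod_range]
    push_cast
    rw [← Finset.prod_range_reflect (fun j => (N : ℝ) - ((b : ℝ) - 1 - (j : ℝ))) i]
    refine Finset.prod_congr rfl fun j hj => ?_
    simp only [Finset.mem_range] at hj
    rw [Nat.cast_sub (show j ≤ N - (b - i) by omega), Nat.cast_sub (show b - i ≤ N by omega),
      Nat.cast_sub hib, Nat.cast_sub (show j ≤ i - 1 by omega),
      Nat.cast_sub (show 1 ≤ i by omega)]
    push_cast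
    ring
  rw [← key, Nat.cast_mul, hcast]
  ring

/-- Per-term identity: `N^{-i} / (N)_{b-i} = P_i(1/N) / (N)_b`. -/
lemma term_eq (N b i : ℕ) (hN1 : 1 ≤ N) (hib : i ≤ b) (hbN : b ≤ N) :
    (((N : ℝ) ^ i)⁻¹) / ((N.descFactorial (b - i) : ℕ) : ℝ)
      = Pprod (b : ℝ) ((N : ℝ)⁻¹) i / ((N.descFactorial b : ℕ) : ℝ) := by
  have hN0 : (0 : ℝ) < (N : ℝ) := by
    have : 0 < N := by omega
    exact_mod_cast this
  have hQpos : ∀ j ∈ range i, (0 : ℝ) < (N : ℝ) - ((b : ℝ) - 1 - (j : ℝ)) := by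
    intro j hj
    simp only [Finset.mem_range] at hj
    have hb1 : (1 : ℝ) ≤ (b : ℝ) := by exact_mod_cast (show 1 ≤ b by omega)
    have hbN' : (b : ℝ) ≤ (N : ℝ) := by exact_mod_cast hbN
    have hj0 : (0 : ℝ) ≤ (j : ℝ) := by positivity
    nlinarith
  have hQne : (∏ j ∈ range i, ((N : ℝ) - ((b : ℝ) - 1 - (j : ℝ)))) ≠ 0 :=
    ne_of_gt (Finset.prod_pos hQpos)
  have hdesc : (0 : ℝ) < ((N.descFactorial (b - i) : ℕ) : ℝ) := by
    have : 0 < N.descFactorial (b - i) := by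
      rcases Nat.eq_zero_or_pos (N.descFactorial (b - i)) with h | h
      · exfalso; rw [Nat.descFactorial_eq_zero_iff_lt] at h; omega
      · exact h
    exact_mod_cast this
  have hP : Pprod (b : ℝ) ((N : ℝ)⁻¹) i
      = (∏ j ∈ range i, ((N : ℝ) - ((b : ℝ) - 1 - (j : ℝ)))) * ((N : ℝ)⁻¹) ^ i := by
    rw [Pprod]
    have hfac : ∀ j ∈ range i, (1 - ((b : ℝ) - 1 - (j : ℝ)) * (N : ℝ)⁻¹)
        = ((N : ℝ) - ((b : ℝ) - 1 - (j : ℝ))) * (N : ℝ)⁻¹ := by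
      intro j _
      field_simp
    rw [Finset.prod_congr rfl hfac, Finset.prod_mul_distrib, Finset.prod_const,
      Finset.card_range]
  rw [descFactorial_split N b i hib hbN, hP]
  field_simp
  ring
  rw [← mul_pow, mul_inv_cancel₀ hN0.ne', one_pow]

lemma tendsto_descFactorial_div_pow (b : ℕ) :
    Filter.Tendsto (fun N : ℕ => ((N.descFactorial b : ℕ) : ℝ) / (N : ℝ) ^ b)
      Filter.atTop (nhds 1) := by
  have h1 : Filter.Tendsto (fun N : ℕ => ∏ j ∈ range b, (1 - (j : ℝ) * ((N : ℝ))⁻¹))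
      Filter.atTop (nhds (∏ _j ∈ range b, (1 : ℝ))) := by
    refine tendsto_finset_prod _ fun j _ => ?_
    have := tendsto_const_nhds (x := (1 : ℝ)) (f := Filter.atTop (α := ℕ))
    have h := this.sub ((tendsto_inv_atTop_nhds_zero_nat (𝕜 := ℝ)).const_mul (j : ℝ))
    simpa using h
  simp only [Finset.prod_const_one] at h1
  refine h1.congr' ?_
  filter_upwards [Filter.eventually_ge_atTop (b + 1)] with N hN
  have hbN : b ≤ N := by omega
  have hN0 : (N : ℝ) ≠ 0 := by
    have : 0 < N := by omega
    positivity
  rw [cast_descFactorial_prod N b hbN]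
  rw [show ((N : ℝ)) ^ b = ∏ _j ∈ range b, (N : ℝ) by rw [Finset.prod_const, Finset.card_range]]
  rw [← Finset.prod_div_distrib]
  refine Finset.prod_congr rfl fun j hj => ?_
  field_simp

lemma tendsto_key (b c m d : ℕ) (hdb : d ≤ b) (hcb : c ≤ b) (hd : d = 2 * m) (hb1 : 1 ≤ b) :
    Filter.Tendsto (fun N : ℕ => (N : ℝ) ^ (c + m) *
        ∑ i ∈ range (d + 1), (d.choose i : ℝ) * (-1 : ℝ) ^ i *
          ((((N : ℝ) ^ i)⁻¹) / ((N.descFactorial (b - i) : ℕ) : ℝ)))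
      Filter.atTop
      (nhds (if b = c then ∏ j ∈ range m, (2 * (j : ℝ) + 1) else 0)) := by
  obtain ⟨p, q, hp, _, hp0, hSp, _⟩ := S_structure (b : ℝ) m
  -- limit of the model function
  have hA : Filter.Tendsto (fun N : ℕ => (N : ℝ) ^ b / ((N.descFactorial b : ℕ) : ℝ))
      Filter.atTop (nhds 1) := by
    have := (tendsto_descFactorial_div_pow b).inv₀ one_ne_zero
    simp only [inv_div, inv_one] at this
    exact this
  have hB : Filter.Tendsto (fun N : ℕ => ((N : ℝ)⁻¹) ^ (b - c)) Filter.atTop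
      (nhds (if b = c then 1 else 0)) := by
    by_cases hbc : b = c
    · subst hbc
      simp only [Nat.sub_self, pow_zero, if_true]
      exact tendsto_const_nhds
    · have hpos : b - c ≠ 0 := by omega
      have := (tendsto_inv_atTop_nhds_zero_nat (𝕜 := ℝ)).pow (b - c)
      rw [zero_pow hpos] at this
      simpa [hbc] using this
  have hC : Filter.Tendsto (fun N : ℕ => p ((N : ℝ)⁻¹)) Filter.atTop (nhds (p 0)) :=
    (hp.tendsto 0).comp (tendsto_inv_atTop_nhds_zero_nat (𝕜 := ℝ))
  have hABC := (hA.mul hB).mul hC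
  have hlim : (1 : ℝ) * (if b = c then 1 else 0) * p 0
      = (if b = c then ∏ j ∈ range m, (2 * (j : ℝ) + 1) else 0) := by
    split_ifs <;> simp [hp0]
  rw [hlim] at hABC
  refine hABC.congr' ?_
  filter_upwards [Filter.eventually_ge_atTop b] with N hbN
  have hN1 : 1 ≤ N := le_trans hb1 hbN
  have hNne : (N : ℝ) ≠ 0 := by
    have : 0 < N := hN1
    positivity
  have hdescne : ((N.descFactorial b : ℕ) : ℝ) ≠ 0 := by
    have : 0 < N.descFactorial b := by
      rcases Nat.eq_zero_or_pos (N.descFactorial b) with h | h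
      · exfalso; rw [Nat.descFactorial_eq_zero_iff_lt] at h; omega
      · exact h
    have h2 : (0 : ℝ) < ((N.descFactorial b : ℕ) : ℝ) := by exact_mod_cast this
    exact ne_of_gt h2
  have hsum : ∑ i ∈ range (d + 1), (d.choose i : ℝ) * (-1 : ℝ) ^ i *
        ((((N : ℝ) ^ i)⁻¹) / ((N.descFactorial (b - i) : ℕ) : ℝ))
      = Ssum (b : ℝ) ((N : ℝ)⁻¹) d / ((N.descFactorial b : ℕ) : ℝ) := by
    rw [Ssum, Finset.sum_div]
    refine Finset.sum_congr rfl fun i hi => ?_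
    simp only [Finset.mem_range] at hi
    rw [term_eq N b i hN1 (by omega) hbN]
    ring
  have e1 : (N : ℝ) ^ (c + m) * ((N : ℝ)⁻¹) ^ m = (N : ℝ) ^ c := by
    rw [pow_add]
    field_simp
    rw [← mul_pow, mul_one_div_cancel hNne, one_pow]
  have e2 : (N : ℝ) ^ b * ((N : ℝ)⁻¹) ^ (b - c) = (N : ℝ) ^ c := by
    have hb : c + (b - c) = b := by omega
    rw [← hb, pow_add]
    field_simp
    rw [Nat.add_sub_cancel_left, ← mul_pow, mul_one_div_cancel hNne, one_pow]
  calc (N : ℝ) ^ b / ((N.descFactorial b : ℕ) : ℝ) * ((N : ℝ)⁻¹) ^ (b - c) * p ((N : ℝ)⁻¹)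
      = ((N : ℝ) ^ b * ((N : ℝ)⁻¹) ^ (b - c)) * p ((N : ℝ)⁻¹) / ((N.descFactorial b : ℕ) : ℝ) := by
        ring
    _ = (N : ℝ) ^ c * p ((N : ℝ)⁻¹) / ((N.descFactorial b : ℕ) : ℝ) := by rw [e2]
    _ = ((N : ℝ) ^ (c + m) * ((N : ℝ)⁻¹) ^ m) * p ((N : ℝ)⁻¹) / ((N.descFactorial b : ℕ) : ℝ) := by
        rw [e1]
    _ = (N : ℝ) ^ (c + m) * (Ssum (b : ℝ) ((N : ℝ)⁻¹) d / ((N.descFactorial b : ℕ) : ℝ)) := by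
        rw [hd, hSp]
        ring
    _ = _ := by rw [← hsum]


instance setoidFinite {α : Type*} [Finite α] : Finite (Setoid α) :=
  Finite.of_injective (fun s : Setoid α => s.r)
    (fun s t h => Setoid.ext fun a b => by rw [show s.r = t.r from h])

/-- The canonical surjection `Quotient s → Quotient t` for `s ≤ t`. -/
def qmap {α : Type*} {s t : Setoid α} (h : s ≤ t) : Quotient s → Quotient t :=
  Quotient.map' id (fun _ _ hab => h hab)

lemma qmap_mk {α : Type*} {s t : Setoid α} (h : s ≤ t) (a : α) :
    qmap h (Quotient.mk s a) = Quotient.mk t a := rfl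

lemma qmap_surjective {α : Type*} {s t : Setoid α} (h : s ≤ t) :
    Function.Surjective (qmap h) := by
  intro q
  induction q using Quotient.inductionOn with
  | h a => exact ⟨Quotient.mk s a, rfl⟩

lemma numBlocks_antitone {α : Type*} [Finite α] {s t : Setoid α} (h : s ≤ t) :
    numBlocks t ≤ numBlocks s :=
  Nat.card_le_card_of_surjective (qmap h) (qmap_surjective h)

lemma eq_of_le_of_numBlocks_le {α : Type*} [Finite α] {s t : Setoid α} (h : s ≤ t)
    (hc : numBlocks s ≤ numBlocks t) : s = t := by
  have hcard : Nat.card (Quotient s) = Nat.card (Quotient t) :=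
    le_antisymm hc (numBlocks_antitone h)
  have hbij : Function.Bijective (qmap h) :=
    (Nat.bijective_iff_surjective_and_card (qmap h)).mpr ⟨qmap_surjective h, hcard⟩
  refine Setoid.ext fun a b => ⟨fun hs => h hs, fun ht => ?_⟩
  have h1 : qmap h (Quotient.mk s a) = qmap h (Quotient.mk s b) := by
    rw [qmap_mk, qmap_mk]
    exact Quotient.sound ht
  have h2 := hbij.injective h1
  exact Quotient.exact h2

lemma numSingletons_le_of_le {k : ℕ} {s t : Setoid (Fin k)} (h : s ≤ t) :
    numSingletons t ≤ numSingletons s := by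
  have hsub : {j : Fin k | ∀ m, t j m → m = j} ⊆ {j : Fin k | ∀ m, s j m → m = j} := by
    intro j hj m hm
    exact hj m (h hm)
  exact Nat.card_le_card_of_injective (Set.inclusion hsub) (Set.inclusion_injective hsub)

lemma numSingletons_le_numBlocks {k : ℕ} (π : Setoid (Fin k)) :
    numSingletons π ≤ numBlocks π := by
  refine Nat.card_le_card_of_injective
    (fun j : {j : Fin k | ∀ m, π j m → m = j} => Quotient.mk π j.1) ?_
  intro j j' hjj
  have h := Quotient.exact hjj
  exact Subtype.ext (j'.2 j.1 (Setoid.symm h))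

end Aux

/-- leading asymptotics of `W̊g_k(σ,τ,N)` when `d = |D(σ∨τ)|` is even, `d ≠ k`. -/
theorem stmt14 (k : ℕ) (hk : 1 ≤ k) (σ τ : Setoid (Fin k))
    (hd_even : numSingletons (σ ⊔ τ) % 2 = 0) (hd_ne : numSingletons (σ ⊔ τ) ≠ k) :
    Filter.Tendsto
      (fun N : ℕ =>
        (N : ℝ) ^ (numBlocks (σ ⊓ τ) + numSingletons (σ ⊔ τ) / 2) * cWg k N σ τ)
      Filter.atTop
      (nhds (((mobius (σ ⊓ τ) σ * mobius (σ ⊓ τ) τ : ℤ) : ℝ) *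
        ∏ j ∈ Finset.range (numSingletons (σ ⊔ τ) / 2), (2 * (j : ℝ) + 1))) := by
  classical
  set d := numSingletons (σ ⊔ τ) with hd_def
  set m := d / 2 with hm_def
  have hdm : d = 2 * m := by omega
  set c := numBlocks (σ ⊓ τ) with hc_def
  have hfin : ({π : Setoid (Fin k) | π ≤ σ ⊓ τ}).Finite := Set.toFinite _
  set F := hfin.toFinset with hF_def
  have hmemF : ∀ π : Setoid (Fin k), π ∈ F ↔ π ≤ σ ⊓ τ := by
    intro π
    rw [hF_def, Set.Finite.mem_toFinset]
    rfl
  -- rewrite cWg as a finite double sum, swapped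
  have hcWg : ∀ N : ℕ, cWg k N σ τ
      = ∑ π ∈ F, ((mobius π σ * mobius π τ : ℤ) : ℝ) *
          ∑ i ∈ range (d + 1), (d.choose i : ℝ) * (-1 : ℝ) ^ i *
            ((((N : ℝ) ^ i)⁻¹) / ((N.descFactorial (numBlocks π - i) : ℕ) : ℝ)) := by
    intro N
    rw [cWg]
    have h1 : ∀ i : ℕ,
        (∑ᶠ π ∈ {π : Setoid (Fin k) | π ≤ σ ⊓ τ},
            ((mobius π σ * mobius π τ : ℤ) : ℝ) * ((N : ℝ) ^ i)⁻¹
              / ((N.descFactorial (numBlocks π - i) : ℕ) : ℝ))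
          = ∑ π ∈ F, ((mobius π σ * mobius π τ : ℤ) : ℝ) * ((N : ℝ) ^ i)⁻¹
              / ((N.descFactorial (numBlocks π - i) : ℕ) : ℝ) := by
      intro i
      rw [← Set.Finite.coe_toFinset hfin, finsum_mem_coe_finset]
    simp only [h1, Finset.mul_sum]
    rw [Finset.sum_comm]
    refine Finset.sum_congr rfl fun π _ => ?_
    refine Finset.sum_congr rfl fun i _ => ?_
    ring
  -- per-π limit
  have hkey : ∀ π ∈ F, Filter.Tendsto
      (fun N : ℕ => (N : ℝ) ^ (c + m) * (((mobius π σ * mobius π τ : ℤ) : ℝ) *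
          ∑ i ∈ range (d + 1), (d.choose i : ℝ) * (-1 : ℝ) ^ i *
            ((((N : ℝ) ^ i)⁻¹) / ((N.descFactorial (numBlocks π - i) : ℕ) : ℝ))))
      Filter.atTop
      (nhds (if π = σ ⊓ τ then ((mobius (σ ⊓ τ) σ * mobius (σ ⊓ τ) τ : ℤ) : ℝ) *
          ∏ j ∈ range m, (2 * (j : ℝ) + 1) else 0)) := by
    intro π hπ
    have hle : π ≤ σ ⊓ τ := (hmemF π).mp hπ
    set b := numBlocks π with hb_def
    have hcb : c ≤ b := numBlocks_antitone hle
    have hdb : d ≤ b := by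
      have h1 : π ≤ σ ⊔ τ := le_trans hle (le_trans inf_le_left le_sup_left)
      exact le_trans (numSingletons_le_of_le h1) (numSingletons_le_numBlocks π)
    have hb1 : 1 ≤ b := by
      have hne : Nonempty (Quotient π) := ⟨Quotient.mk π ⟨0, hk⟩⟩
      have hpos : 0 < numBlocks π := Nat.card_pos
      omega
    have hbciff : b = c ↔ π = σ ⊓ τ := by
      constructor
      · intro hbc
        exact eq_of_le_of_numBlocks_le hle (by omega)
      · intro h
        rw [hb_def, h]
    have hT := (tendsto_key b c m d hdb hcb hdm hb1).const_mul
      ((mobius π σ * mobius π τ : ℤ) : ℝ)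
    have hfun : (fun N : ℕ => ((mobius π σ * mobius π τ : ℤ) : ℝ) * ((N : ℝ) ^ (c + m) *
        ∑ i ∈ range (d + 1), (d.choose i : ℝ) * (-1 : ℝ) ^ i *
          ((((N : ℝ) ^ i)⁻¹) / ((N.descFactorial (b - i) : ℕ) : ℝ))))
        = (fun N : ℕ => (N : ℝ) ^ (c + m) * (((mobius π σ * mobius π τ : ℤ) : ℝ) *
        ∑ i ∈ range (d + 1), (d.choose i : ℝ) * (-1 : ℝ) ^ i *
          ((((N : ℝ) ^ i)⁻¹) / ((N.descFactorial (b - i) : ℕ) : ℝ)))) := by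
      funext N; ring
    rw [hfun] at hT
    have hval : ((mobius π σ * mobius π τ : ℤ) : ℝ) *
        (if b = c then ∏ j ∈ range m, (2 * (j : ℝ) + 1) else 0)
        = (if π = σ ⊓ τ then ((mobius (σ ⊓ τ) σ * mobius (σ ⊓ τ) τ : ℤ) : ℝ) *
            ∏ j ∈ range m, (2 * (j : ℝ) + 1) else 0) := by
      by_cases hbc : π = σ ⊓ τ
      · rw [if_pos ((hbciff.mpr hbc)), if_pos hbc, hbc]
      · rw [if_neg (fun h => hbc (hbciff.mp h)), if_neg hbc, mul_zero]
    rw [hval] at hT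
    exact hT
  have hsum := tendsto_finset_sum F hkey
  have hval2 : (∑ π ∈ F, if π = σ ⊓ τ then ((mobius (σ ⊓ τ) σ * mobius (σ ⊓ τ) τ : ℤ) : ℝ) *
      ∏ j ∈ range m, (2 * (j : ℝ) + 1) else 0)
      = ((mobius (σ ⊓ τ) σ * mobius (σ ⊓ τ) τ : ℤ) : ℝ) * ∏ j ∈ range m, (2 * (j : ℝ) + 1) := by
    rw [Finset.sum_ite_eq' F (σ ⊓ τ)]
    rw [if_pos ((hmemF _).mpr le_rfl)]
  rw [hval2] at hsum
  refine hsum.congr ?_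
  intro N
  rw [hcWg N, Finset.mul_sum]


end WgPerm

end
end
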